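/- Let n ≥ 2 be an integer, l = (√3·n/2)^{1/2}, δ ∈ ℝ², and D = {G₂ f/l + δ : f ∈ ℤ²} ∩ [0,1]², and suppose D has exactly n elements. Then for every point x = (x₁, x₂) ∈ D whose second coordinate is not maximal in D (i.e., x₂ < max{y₂ : (y₁, y₂) ∈ D}), there exists a point y = (y₁, y₂) ∈ D with y₂ > x₂ and y₂ − x₂ ≤ (2√3/3 + 1)·n^{−1}. -/

import Mathlib

open Matrix

/-- The generator matrix `G₂` of the 15-degree rotated hexagonal lattice. -/
noncomputable def G₂ : Matrix (Fin 2) (Fin 2) ℝ :=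
  !![(Real.sqrt 3 - 1) / (2 * Real.sqrt 2), -(Real.sqrt 3 + 1) / (2 * Real.sqrt 2);
     -(Real.sqrt 3 + 1) / (2 * Real.sqrt 2), (Real.sqrt 3 - 1) / (2 * Real.sqrt 2)]

noncomputable def phi : ℤ√3 →+* ℝ :=
  Zsqrtd.lift ⟨Real.sqrt 3, by
    rw [Real.mul_self_sqrt (by norm_num : (0:ℝ) ≤ 3)]; norm_num⟩

noncomputable def phi' : ℤ√3 →+* ℝ :=
  Zsqrtd.lift ⟨-Real.sqrt 3, by
    rw [neg_mul_neg, Real.mul_self_sqrt (by norm_num : (0:ℝ) ≤ 3)]; norm_num⟩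

lemma phi_apply (z : ℤ√3) : phi z = z.re + z.im * Real.sqrt 3 := rfl
lemma phi'_apply (z : ℤ√3) : phi' z = z.re - z.im * Real.sqrt 3 := by
  show (z.re : ℝ) + z.im * -Real.sqrt 3 = _; ring

def wu : (ℤ√3)ˣ := ⟨⟨2,1⟩, ⟨2,-1⟩, by decide, by decide⟩

lemma phi_wu_zpow (J : ℤ) : phi ↑(wu ^ J) = (2 + Real.sqrt 3) ^ J := by
  have h1 : (Units.map (phi : ℤ√3 →+* ℝ).toMonoidHom) (wu ^ J)
      = ((Units.map (phi : ℤ√3 →+* ℝ).toMonoidHom) wu) ^ J := map_zpow _ _ _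
  have h2 : ((((Units.map (phi : ℤ√3 →+* ℝ).toMonoidHom) wu) ^ J : ℝˣ) : ℝ)
      = (((Units.map (phi : ℤ√3 →+* ℝ).toMonoidHom) wu : ℝˣ) : ℝ) ^ J :=
    Units.val_zpow_eq_zpow_val _ _
  have h3 : (((Units.map (phi : ℤ√3 →+* ℝ).toMonoidHom) wu : ℝˣ) : ℝ) = 2 + Real.sqrt 3 := by
    simp [wu, phi_apply]
  calc phi ↑(wu ^ J) = (((Units.map (phi : ℤ√3 →+* ℝ).toMonoidHom) (wu ^ J) : ℝˣ) : ℝ) := rfl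
    _ = (2 + Real.sqrt 3) ^ J := by rw [h1, h2, h3]

lemma phi'_wu_zpow (J : ℤ) : phi' ↑(wu ^ J) = (2 - Real.sqrt 3) ^ J := by
  have h1 : (Units.map (phi' : ℤ√3 →+* ℝ).toMonoidHom) (wu ^ J)
      = ((Units.map (phi' : ℤ√3 →+* ℝ).toMonoidHom) wu) ^ J := map_zpow _ _ _
  have h2 := Units.val_zpow_eq_zpow_val ((Units.map (phi' : ℤ√3 →+* ℝ).toMonoidHom) wu) J
  have h3 : (((Units.map (phi' : ℤ√3 →+* ℝ).toMonoidHom) wu : ℝˣ) : ℝ) = 2 - Real.sqrt 3 := by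
    simp [wu, phi'_apply]
  calc phi' ↑(wu ^ J) = (((Units.map (phi' : ℤ√3 →+* ℝ).toMonoidHom) (wu ^ J) : ℝˣ) : ℝ) := rfl
    _ = (2 - Real.sqrt 3) ^ J := by rw [h1, h2, h3]

lemma even_step_right (z : ℤ√3) (h : Even (z.re - z.im)) :
    Even ((z * (⟨2,1⟩ : ℤ√3)).re - (z * (⟨2,1⟩ : ℤ√3)).im) := by
  obtain ⟨p, hp⟩ := h
  refine ⟨p + z.im, ?_⟩
  have h1 : (z * (⟨2,1⟩ : ℤ√3)).re = z.re * 2 + 3 * z.im * 1 := Zsqrtd.re_mul _ _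
  have h2 : (z * (⟨2,1⟩ : ℤ√3)).im = z.re * 1 + z.im * 2 := Zsqrtd.im_mul _ _
  rw [h1, h2]; linarith

lemma even_step_left (z : ℤ√3) (h : Even (z.re - z.im)) :
    Even ((z * (⟨2,-1⟩ : ℤ√3)).re - (z * (⟨2,-1⟩ : ℤ√3)).im) := by
  obtain ⟨p, hp⟩ := h
  refine ⟨3 * p - z.im, ?_⟩
  have h1 : (z * (⟨2,-1⟩ : ℤ√3)).re = z.re * 2 + 3 * z.im * (-1) := Zsqrtd.re_mul _ _
  have h2 : (z * (⟨2,-1⟩ : ℤ√3)).im = z.re * (-1) + z.im * 2 := Zsqrtd.im_mul _ _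
  rw [h1, h2]; linarith

lemma even_mul_wu_zpow (c : ℤ√3) (hc : Even (c.re - c.im)) (J : ℤ) :
    Even ((c * ↑(wu ^ J)).re - (c * ↑(wu ^ J)).im) := by
  induction J using Int.induction_on with
  | zero => simpa using hc
  | succ k ih =>
      have h : ((wu ^ ((k : ℤ) + 1) : (ℤ√3)ˣ) : ℤ√3) = ↑(wu ^ (k : ℤ)) * (⟨2,1⟩ : ℤ√3) := by
        rw [_root_.zpow_add_one, Units.val_mul]; rfl
      rw [h, ← mul_assoc]
      exact even_step_right _ ih
  | pred k ih =>
      have h : ((wu ^ (-(k : ℤ) - 1) : (ℤ√3)ˣ) : ℤ√3) = ↑(wu ^ (-k : ℤ)) * (⟨2,-1⟩ : ℤ√3) := by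
        rw [_root_.zpow_sub_one, Units.val_mul]; rfl
      rw [h, ← mul_assoc]
      exact even_step_left _ ih

lemma mulVec_step (Z : ℤ√3) (h : Even (Z.re - Z.im)) :
    ∃ e : Fin 2 → ℤ,
      G₂.mulVec (fun j => (e j : ℝ)) 0 = -((Z.re : ℝ) + Z.im * Real.sqrt 3) / (2 * Real.sqrt 2) ∧
      G₂.mulVec (fun j => (e j : ℝ)) 1 = -((Z.re : ℝ) - Z.im * Real.sqrt 3) / (2 * Real.sqrt 2) := by
  obtain ⟨p, hp⟩ := h
  refine ⟨![p, p + Z.im], ?_, ?_⟩ <;>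
  · have hk : (Z.re : ℝ) = 2 * p + Z.im := by
      have : Z.re = 2 * p + Z.im := by omega
      exact_mod_cast congrArg (Int.cast : ℤ → ℝ) this
    have h2 : Real.sqrt 2 ≠ 0 := by positivity
    simp [G₂, Matrix.mulVec, dotProduct, Fin.sum_univ_two, hk]
    field_simp
    ring

lemma key_lemma (s2 s3 l T t : ℝ) (hs2sq : s2 * s2 = 2) (hs3sq : s3 * s3 = 3)
    (hs2pos : 0 < s2) (hs3pos : 0 < s3) (hl0 : 0 < l) (hT0 : 0 < T)
    (hTu : T * (1 + s3) ≤ s2 * l) (hTl : s2 * l < T * (2 + s3) * (1 + s3))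
    (ht0 : 0 ≤ t) (ht1 : t ≤ 1) :
    ∃ C1 C2 : ℝ, ∃ c : ℤ√3, Even (c.re - c.im) ∧ phi c = -C1 ∧ phi' c = -C2 ∧
      0 < C2 ∧ 0 ≤ t * (2 * s2 * l) + C1 * T ∧
      t * (2 * s2 * l) + C1 * T ≤ 2 * s2 * l ∧
      C2 * l ≤ (2 + s3) * T * s2 := by
  have hs3gt1 : 1 < s3 := by nlinarith
  have hs3eq : Real.sqrt 3 = s3 := by
    rw [← hs3sq]; exact Real.sqrt_mul_self hs3pos.le
  have hs3lt2 : s3 < 2 := by nlinarith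
  have hQ0 : (0:ℝ) < 2 * s2 * l := by positivity
  have e5 : s2 * ((2 + s3) * T * s2) = 2 * ((2 + s3) * T) := by
    linear_combination ((2 + s3) * T) * hs2sq
  by_cases hc1 : (1 + s3) * T ≤ t * (2 * s2 * l)
  · -- case 1 : step has negative horizontal part
    refine ⟨-(1 + s3), s3 - 1, ⟨1, 1⟩, ⟨0, by simp⟩, ?_, ?_, by linarith, by linarith, ?_, ?_⟩
    · rw [phi_apply]; push_cast; rw [hs3eq]; ring
    · rw [phi'_apply]; push_cast; rw [hs3eq]; ring
    · have h1 := mul_le_mul_of_nonneg_right ht1 (le_of_lt hQ0)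
      have h2 : 0 < (1 + s3) * T := by positivity
      linarith
    · have h0 : (0:ℝ) < s3 - 1 := by linarith
      have h := mul_lt_mul_of_pos_left hTl h0
      have e1 : (s3 - 1) * (s2 * l) = s2 * ((s3 - 1) * l) := by ring
      have e2 : (s3 - 1) * (T * (2 + s3) * (1 + s3)) = 2 * ((2 + s3) * T) := by
        linear_combination ((2 + s3) * T) * hs3sq
      have hfin : s2 * ((s3 - 1) * l) < s2 * ((2 + s3) * T * s2) := by linarith
      exact le_of_lt ((mul_lt_mul_iff_right₀ hs2pos).mp hfin)
  · push_neg at hc1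
    have htQ : 0 ≤ t * (2 * s2 * l) := mul_nonneg ht0 (le_of_lt hQ0)
    by_cases hd : (1 + s3) * T * (2 + s3) ≤ 2 * s2 * l
    · -- case 2
      refine ⟨4 + 2 * s3, 4 - 2 * s3, ⟨-4, -2⟩, ⟨-1, by simp⟩, ?_, ?_, by linarith, ?_, ?_, ?_⟩
      · rw [phi_apply]; push_cast; rw [hs3eq]; ring
      · rw [phi'_apply]; push_cast; rw [hs3eq]; ring
      · have : 0 < (4 + 2 * s3) * T := by positivity
        linarith
      · have e : (1 + s3) * T * (2 + s3) = (5 + 3 * s3) * T := by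
          linear_combination T * hs3sq
        linarith
      · have h0 : (0:ℝ) < 4 - 2 * s3 := by linarith
        have h := mul_lt_mul_of_pos_left hTl h0
        have e1 : (4 - 2 * s3) * (s2 * l) = s2 * ((4 - 2 * s3) * l) := by ring
        have e2 : (4 - 2 * s3) * (T * (2 + s3) * (1 + s3)) = (2 * s3 - 2) * ((2 + s3) * T) := by
          linear_combination (-2 * (2 + s3) * T) * hs3sq
        have e3 : 0 ≤ (4 - 2 * s3) * ((2 + s3) * T) :=
          mul_nonneg (by linarith) (by positivity)
        have hfin : s2 * ((4 - 2 * s3) * l) < s2 * ((2 + s3) * T * s2) := by linarith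
        exact le_of_lt ((mul_lt_mul_iff_right₀ hs2pos).mp hfin)
    · push_neg at hd
      by_cases he : 2 * ((1 + s3) * T * (2 + s3)) ≤ (s3 + 1) * (2 * s2 * l)
      · -- case 3
        have h13 : (0:ℝ) < 1 + s3 := by linarith
        have e6 : 2 * ((1 + s3) * T * (2 + s3)) = (1 + s3) * (2 * ((2 + s3) * T)) := by ring
        have e7 : (s3 + 1) * (2 * s2 * l) = (1 + s3) * (2 * s2 * l) := by ring
        have he' : 2 * ((2 + s3) * T) ≤ 2 * s2 * l := by
          have := (mul_le_mul_iff_right₀ h13).mp (by linarith : (1 + s3) * (2 * ((2 + s3) * T)) ≤ (1 + s3) * (2 * s2 * l))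
          linarith
        refine ⟨3 + s3, 3 - s3, ⟨-3, -1⟩, ⟨-1, by simp⟩, ?_, ?_, by linarith, ?_, ?_, ?_⟩
        · rw [phi_apply]; push_cast; rw [hs3eq]; ring
        · rw [phi'_apply]; push_cast; rw [hs3eq]; ring
        · have : 0 < (3 + s3) * T := by positivity
          linarith
        · linarith
        · have h0 : (0:ℝ) < 3 - s3 := by linarith
          have h := mul_lt_mul_of_pos_left hd h0
          have e2 : (3 - s3) * ((1 + s3) * T * (2 + s3)) = 2 * s3 * ((2 + s3) * T) := by
            linear_combination (-(2 + s3) * T) * hs3sq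
          have e3 : 2 * s3 * ((2 + s3) * T) ≤ 4 * ((2 + s3) * T) := by
            have : 0 ≤ (2 - s3) * ((2 + s3) * T) := mul_nonneg (by linarith) (by positivity)
            linarith
          have hfin : s2 * ((3 - s3) * l) < s2 * ((2 + s3) * T * s2) := by linarith
          exact le_of_lt ((mul_lt_mul_iff_right₀ hs2pos).mp hfin)
      · -- case 4
        push_neg at he
        have h13 : (0:ℝ) < 1 + s3 := by linarith
        have he' : 2 * s2 * l < 2 * ((2 + s3) * T) := by
          have := (mul_lt_mul_iff_right₀ h13).mp (by linarith : (1 + s3) * (2 * s2 * l) < (1 + s3) * (2 * ((2 + s3) * T)))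
          linarith
        refine ⟨2, 2, ⟨-2, 0⟩, ⟨-1, by simp⟩, ?_, ?_, by norm_num, ?_, ?_, ?_⟩
        · rw [phi_apply]; push_cast; rw [hs3eq]; ring
        · rw [phi'_apply]; push_cast; rw [hs3eq]; ring
        · have : 0 < 2 * T := by positivity
          linarith
        · have h1 : (s3 - 1) * T ≥ 0 := mul_nonneg (by linarith) (le_of_lt hT0)
          linarith
        · have hfin : s2 * (2 * l) < s2 * ((2 + s3) * T * s2) := by linarith
          exact le_of_lt ((mul_lt_mul_iff_right₀ hs2pos).mp hfin)

/-- Theorem 4(iii) of He (2017): in the `n`-point rotated sphere packing design with the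
magic angle, every point whose second coordinate is not maximal has a point above it
within vertical distance `(2√3/3 + 1) n⁻¹`. -/
theorem magic_angle_second_coordinate_gap
    (n : ℕ) (hn : 2 ≤ n)
    (l : ℝ) (hl : l = Real.sqrt (Real.sqrt 3 * n / 2))
    (δ : Fin 2 → ℝ)
    (D : Set (Fin 2 → ℝ))
    (hD : D = {x | (∃ f : Fin 2 → ℤ, ∀ i,
        x i = G₂.mulVec (fun j => (f j : ℝ)) i / l + δ i) ∧
      ∀ i, x i ∈ Set.Icc (0 : ℝ) 1})
    (hcard : D.ncard = n)
    (x : Fin 2 → ℝ) (hx : x ∈ D)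
    (hnotmax : ∃ z ∈ D, x 1 < z 1) :
    ∃ y ∈ D, x 1 < y 1 ∧ y 1 - x 1 ≤ (2 * Real.sqrt 3 / 3 + 1) * (n : ℝ)⁻¹ := by
  obtain ⟨z, hzD, hzgt⟩ := hnotmax
  set s3 := Real.sqrt 3 with hs3def
  set s2 := Real.sqrt 2 with hs2def
  have hs3pos : 0 < s3 := Real.sqrt_pos.mpr (by norm_num)
  have hs2pos : 0 < s2 := Real.sqrt_pos.mpr (by norm_num)
  have hs3sq : s3 * s3 = 3 := Real.mul_self_sqrt (by norm_num)
  have hs2sq : s2 * s2 = 2 := Real.mul_self_sqrt (by norm_num)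
  have hn0 : (0:ℝ) < n := by positivity
  have hl0 : 0 < l := by
    rw [hl]; apply Real.sqrt_pos.mpr; positivity
  have hl2 : l ^ 2 = s3 * n / 2 := by
    rw [hl]; exact Real.sq_sqrt (by positivity)
  have hs3ne : s3 ≠ 0 := ne_of_gt hs3pos
  have hnne : (n:ℝ) ≠ 0 := ne_of_gt hn0
  have hB : (2 * s3 / 3 + 1) * (n : ℝ)⁻¹ = (2 + s3) / (2 * l ^ 2) := by
    rw [hl2]
    field_simp
    ring_nf
    linear_combination 2 * hs3sq
  -- choose the scale index J
  have hr1 : 1 < 2 + s3 := by linarith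
  have hSpos : 0 < s2 * l / (1 + s3) := by positivity
  obtain ⟨J, hJ1, hJ2⟩ := exists_mem_Ico_zpow hSpos hr1
  set T : ℝ := (2 + s3) ^ J with hTdef
  have hT0 : 0 < T := zpow_pos (by linarith) J
  have hTu : T * (1 + s3) ≤ s2 * l := by
    rw [le_div_iff₀ (by positivity)] at hJ1
    linarith
  have hTl : s2 * l < T * (2 + s3) * (1 + s3) := by
    rw [zpow_add_one₀ (by positivity : (2:ℝ) + s3 ≠ 0), div_lt_iff₀ (by positivity)] at hJ2
    linarith
  -- coordinates of x and z
  rw [hD] at hx hzD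
  obtain ⟨⟨f, hf⟩, hbox⟩ := hx
  obtain ⟨hzlat, hzbox⟩ := hzD
  have hx00 : 0 ≤ x 0 := (hbox 0).1
  have hx01 : x 0 ≤ 1 := (hbox 0).2
  have hx10 : 0 ≤ x 1 := (hbox 1).1
  have hz1 : z 1 ≤ 1 := (hzbox 1).2
  have hQ0 : (0:ℝ) < 2 * s2 * l := by positivity
  obtain ⟨C1, C2, c, hcev, hphic, hphic', hC2, hg1, hg2, hg4⟩ :=
    key_lemma s2 s3 l T (x 0) hs2sq hs3sq hs2pos hs3pos hl0 hT0 hTu hTl hx00 hx01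
  set Z : ℤ√3 := c * ↑(wu ^ J) with hZdef
  have hZev : Even (Z.re - Z.im) := even_mul_wu_zpow c hcev J
  obtain ⟨e, he0, he1⟩ := mulVec_step Z hZev
  have hphiZ : (Z.re : ℝ) + Z.im * s3 = -C1 * T := by
    have h1 : phi Z = phi c * phi ↑(wu ^ J) := map_mul _ _ _
    rw [phi_wu_zpow, hphic] at h1
    rw [← phi_apply, h1]
  have hinv : ((2 - s3) ^ J : ℝ) = T⁻¹ := by
    have hone : ((2 + s3) * (2 - s3) : ℝ) = 1 := by linear_combination -hs3sq
    have h1 : ((2 + s3) * (2 - s3) : ℝ) ^ J = 1 := by rw [hone, _root_.one_zpow]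
    rw [mul_zpow] at h1
    exact (inv_eq_of_mul_eq_one_right h1).symm
  have hphiZ' : (Z.re : ℝ) - Z.im * s3 = -C2 * T⁻¹ := by
    have h1 : phi' Z = phi' c * phi' ↑(wu ^ J) := map_mul _ _ _
    rw [phi'_wu_zpow, hphic', hinv] at h1
    rw [← phi'_apply, h1]
  have hw0 : G₂.mulVec (fun j => (e j : ℝ)) 0 = C1 * T / (2 * s2) := by
    rw [he0, hphiZ]; ring
  have hw1 : G₂.mulVec (fun j => (e j : ℝ)) 1 = C2 * T⁻¹ / (2 * s2) := by
    rw [he1, hphiZ']; ring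
  set v2 : ℝ := C2 * T⁻¹ / (2 * s2) / l with hv2def
  have hv2pos : 0 < v2 := by positivity
  have hv2le : v2 ≤ (2 + s3) / (2 * l ^ 2) := by
    have hv2eq : v2 = C2 / (2 * s2 * T * l) := by
      rw [hv2def, ← div_eq_mul_inv, div_div, div_div]
      ring_nf
    rw [hv2eq, div_le_div_iff₀ (by positivity) (by positivity)]
    have h := mul_le_mul_of_nonneg_right hg4 (show (0:ℝ) ≤ 2 * l by linarith)
    linarith only [h]
  have heq0 : x 0 + G₂.mulVec (fun j => (e j : ℝ)) 0 / l
      = (x 0 * (2 * s2 * l) + C1 * T) / (2 * s2 * l) := by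
    rw [hw0]
    first
    | (field_simp; ring)
    | field_simp
  by_cases hceil : x 1 + v2 ≤ 1
  · -- use the shifted point y = x + step
    refine ⟨fun i => x i + G₂.mulVec (fun j => (e j : ℝ)) i / l, ?_, ?_, ?_⟩
    · rw [hD]
      refine ⟨⟨fun j => f j + e j, fun i => ?_⟩, fun i => ?_⟩
      · show x i + G₂.mulVec (fun j => (e j : ℝ)) i / l
            = G₂.mulVec (fun j => ((f j + e j : ℤ) : ℝ)) i / l + δ i
        have hadd : G₂.mulVec (fun j => ((f j + e j : ℤ) : ℝ)) i
            = G₂.mulVec (fun j => (f j : ℝ)) i + G₂.mulVec (fun j => (e j : ℝ)) i := by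
          have hfe : (fun j => ((f j + e j : ℤ) : ℝ))
              = (fun j => (f j : ℝ)) + (fun j => (e j : ℝ)) := by
            funext j; push_cast; rfl
          rw [hfe, Matrix.mulVec_add]; rfl
        rw [hadd, hf i]; ring
      · fin_cases i
        · constructor
          · show (0:ℝ) ≤ x 0 + G₂.mulVec (fun j => (e j : ℝ)) 0 / l
            rw [heq0]
            exact div_nonneg hg1 (le_of_lt hQ0)
          · show x 0 + G₂.mulVec (fun j => (e j : ℝ)) 0 / l ≤ 1
            rw [heq0, div_le_one hQ0]
            exact hg2
        · constructor
          · show (0:ℝ) ≤ x 1 + G₂.mulVec (fun j => (e j : ℝ)) 1 / l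
            rw [hw1]
            have : (0:ℝ) ≤ v2 := le_of_lt hv2pos
            rw [hv2def] at this
            linarith
          · show x 1 + G₂.mulVec (fun j => (e j : ℝ)) 1 / l ≤ 1
            rw [hw1]
            rw [hv2def] at hceil
            exact hceil
    · show x 1 < x 1 + G₂.mulVec (fun j => (e j : ℝ)) 1 / l
      rw [hw1]
      have h := hv2pos
      rw [hv2def] at h
      linarith
    · show x 1 + G₂.mulVec (fun j => (e j : ℝ)) 1 / l - x 1 ≤ _
      rw [hw1, hB]
      have h := hv2le
      rw [hv2def] at h
      linarith
  · -- use z itself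
    push_neg at hceil
    refine ⟨z, ?_, hzgt, ?_⟩
    · rw [hD]; exact ⟨hzlat, hzbox⟩
    · rw [hB]
      linarith [hv2le]
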